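/- Consider the Glauber dynamics for the Ising model on a finite box Λ ⊂ ℤ² at any inverse temperature β with boundary condition τ, and let B₁,…,B_k be an arbitrary cover of Λ. Then the spectral gap gap_Λ^τ of the single-site heat-bath dynamics on Λ and the spectral gap gap_𝓑^τ of the block dynamics corresponding to 𝓑 = {B₁,…,B_k} satisfy gap_Λ^τ ≥ (sup_{x∈Λ} #{i : B_i ∋ x})⁻¹ · gap_𝓑^τ · inf_i inf_φ gap_{B_i}^φ, where the inner infimum ranges over all boundary conditions φ on B_i and gap_{B_i}^φ is the spectral gap of the single-site dynamics on B_i with boundary condition φ. -/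

import Mathlib

open scoped Classical

/-- Sites of the square lattice `ℤ²`. -/
abbrev Site : Type := ℤ × ℤ

/-- Nearest-neighbor adjacency in `ℤ²`. -/
def Adj (u v : Site) : Prop :=
  (u.1 - v.1).natAbs + (u.2 - v.2).natAbs = 1

instance : ∀ u v : Site, Decidable (Adj u v) := fun u v => by
  unfold Adj; infer_instance

/-- The four nearest neighbors of a site. -/
def nbrs (u : Site) : Finset Site :=
  {(u.1 + 1, u.2), (u.1 - 1, u.2), (u.1, u.2 + 1), (u.1, u.2 - 1)}

/-- The (outer) boundary `∂Λ`: sites of `ℤ² ∖ Λ` adjacent to `Λ`. -/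
def bdry (Λ : Finset Site) : Finset Site :=
  (Λ.biUnion nbrs) \ Λ

/-- The spin `±1` associated to a Boolean. -/
noncomputable def spin (b : Bool) : ℝ := if b then 1 else -1

/-- The box `⟦a+1, a+m⟧ × ⟦b+1, b+n⟧` of dimensions `m × n`. -/
noncomputable def box (a b : ℤ) (m n : ℕ) : Finset Site :=
  Finset.Icc (a + 1) (a + m) ×ˢ Finset.Icc (b + 1) (b + n)

/-- `β` times the negative Hamiltonian: `β ∑_{u∼v} σ(u)σ(v)`, with each pair having at
least one endpoint in `Λ`, boundary spins given by `τ`. -/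
noncomputable def energy (β : ℝ) (Λ : Finset Site) (τ : bdry Λ → Bool) (σ : Λ → Bool) : ℝ :=
  β * ((1 / 2) * ∑ u : Λ, ∑ v : Λ, (if Adj u.1 v.1 then spin (σ u) * spin (σ v) else 0)
    + ∑ u : Λ, ∑ v : bdry Λ, (if Adj u.1 v.1 then spin (σ u) * spin (τ v) else 0))

/-- The Gibbs measure `μ_Λ^τ` at inverse temperature `β`. -/
noncomputable def gibbs (β : ℝ) (Λ : Finset Site) (τ : bdry Λ → Bool) (σ : Λ → Bool) : ℝ :=
  Real.exp (energy β Λ τ σ) / ∑ σ' : Λ → Bool, Real.exp (energy β Λ τ σ')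

/-- Heat-bath transition rate `c(x,σ)`. -/
noncomputable def rate (β : ℝ) (Λ : Finset Site) (τ : bdry Λ → Bool) (x : Λ)
    (σ : Λ → Bool) : ℝ :=
  1 / (1 + Real.exp (-2 * β * spin (σ x) *
    ((∑ y : Λ, if Adj x.1 y.1 then spin (σ y) else 0)
      + ∑ y : bdry Λ, if Adj x.1 y.1 then spin (τ y) else 0)))

/-- The configuration `σ^x` obtained from `σ` by flipping the spin at `x`. -/
def flipAt (Λ : Finset Site) (σ : Λ → Bool) (x : Λ) : Λ → Bool :=
  Function.update σ x (!σ x)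

/-- Dirichlet form `𝓔(f)` of the heat-bath Glauber dynamics. -/
noncomputable def dirichlet (β : ℝ) (Λ : Finset Site) (τ : bdry Λ → Bool)
    (f : (Λ → Bool) → ℝ) : ℝ :=
  (1 / 2) * ∑ σ : Λ → Bool, ∑ x : Λ,
    gibbs β Λ τ σ * rate β Λ τ x σ * (f (flipAt Λ σ x) - f σ) ^ 2

/-- Variance of `f` under the Gibbs measure. -/
noncomputable def isingVar (β : ℝ) (Λ : Finset Site) (τ : bdry Λ → Bool)
    (f : (Λ → Bool) → ℝ) : ℝ :=
  ∑ σ : Λ → Bool, gibbs β Λ τ σ * (f σ - ∑ σ' : Λ → Bool, gibbs β Λ τ σ' * f σ') ^ 2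

/-- Spectral gap of the continuous-time heat-bath Glauber dynamics:
`inf` of `𝓔(f)/Var(f)` over nonconstant `f`. -/
noncomputable def gap (β : ℝ) (Λ : Finset Site) (τ : bdry Λ → Bool) : ℝ :=
  sInf {g : ℝ | ∃ f : (Λ → Bool) → ℝ, (∃ σ σ', f σ ≠ f σ') ∧
    g = dirichlet β Λ τ f / isingVar β Λ τ f}

/-- Critical inverse temperature `β_c = ½ log(1+√2)`. -/
noncomputable def betaC : ℝ := Real.log (1 + Real.sqrt 2) / 2

/-- Heat-bath block-update kernel for a block `B`: resample the spins of `Λ ∩ B` from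
the Gibbs measure conditioned on the spins outside `B`. -/
noncomputable def blockKernel (β : ℝ) (Λ : Finset Site) (τ : bdry Λ → Bool)
    (B : Finset Site) (σ σ' : Λ → Bool) : ℝ :=
  if ∀ x : Λ, (x : Site) ∉ B → σ' x = σ x then
    gibbs β Λ τ σ' /
      ∑ σ'' : Λ → Bool,
        if ∀ x : Λ, (x : Site) ∉ B → σ'' x = σ x then gibbs β Λ τ σ'' else 0
  else 0

/-- Dirichlet form `⟨-𝓛f, f⟩_{L²(μ)}` of the continuous-time block dynamics with
blocks `𝓑 i`, `i : Fin k` (each block carrying a rate-one Poisson clock). -/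
noncomputable def blockDirichlet (β : ℝ) (Λ : Finset Site) (τ : bdry Λ → Bool)
    {k : ℕ} (𝓑 : Fin k → Finset Site) (f : (Λ → Bool) → ℝ) : ℝ :=
  ∑ i : Fin k, ∑ σ : Λ → Bool,
    gibbs β Λ τ σ * f σ * (f σ - ∑ σ' : Λ → Bool, blockKernel β Λ τ (𝓑 i) σ σ' * f σ')

/-- Spectral gap of the block dynamics. -/
noncomputable def blockGap (β : ℝ) (Λ : Finset Site) (τ : bdry Λ → Bool)
    {k : ℕ} (𝓑 : Fin k → Finset Site) : ℝ :=
  sInf {g : ℝ | ∃ f : (Λ → Bool) → ℝ, (∃ σ σ', f σ ≠ f σ') ∧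
    g = blockDirichlet β Λ τ 𝓑 f / isingVar β Λ τ f}

namespace Stmt5Aux

lemma adj_symm {u v : Site} (h : Adj u v) : Adj v u := by
  unfold Adj at *; omega

lemma mem_nbrs_of_adj {u v : Site} (h : Adj u v) : v ∈ nbrs u := by
  unfold Adj at h
  simp only [nbrs, Finset.mem_insert, Finset.mem_singleton, Prod.ext_iff]
  omega

lemma mem_bdry_of_adj {A : Finset Site} {u v : Site} (hu : u ∈ A) (hv : v ∉ A)
    (h : Adj u v) : v ∈ bdry A := by
  simp only [bdry, Finset.mem_sdiff, Finset.mem_biUnion]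
  exact ⟨⟨u, hu, mem_nbrs_of_adj h⟩, hv⟩

lemma not_mem_of_mem_bdry {A : Finset Site} {v : Site} (h : v ∈ bdry A) : v ∉ A :=
  (Finset.mem_sdiff.mp h).2

lemma bdry_sub {B Λ : Finset Site} (hB : B ⊆ Λ) {v : Site} (hv : v ∈ bdry B)
    (hvΛ : v ∉ Λ) : v ∈ bdry Λ := by
  simp only [bdry, Finset.mem_sdiff, Finset.mem_biUnion] at *
  obtain ⟨⟨u, hu, hn⟩, _⟩ := hv
  exact ⟨⟨u, hB hu, hn⟩, hvΛ⟩

/-- Energy functional expressed with a total configuration. -/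
noncomputable def en (β : ℝ) (A C : Finset Site) (s : Site → Bool) : ℝ :=
  β * ((1 / 2) * ∑ u ∈ A, ∑ v ∈ A, (if Adj u v then spin (s u) * spin (s v) else 0)
    + ∑ u ∈ A, ∑ v ∈ C, (if Adj u v then spin (s u) * spin (s v) else 0))

/-- Local field expressed with a total configuration. -/
noncomputable def fld (A C : Finset Site) (s : Site → Bool) (x : Site) : ℝ :=
  (∑ y ∈ A, if Adj x y then spin (s y) else 0)
    + ∑ y ∈ C, if Adj x y then spin (s y) else 0

/-- Total configuration built from interior and boundary data. -/
noncomputable def mix (A C : Finset Site) (σ : A → Bool) (η : C → Bool) : Site → Bool :=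
  fun v => if h : v ∈ A then σ ⟨v, h⟩ else if h' : v ∈ C then η ⟨v, h'⟩ else false

lemma mix_int {A C : Finset Site} (σ : A → Bool) (η : C → Bool) (u : A) :
    mix A C σ η u.1 = σ u := by
  simp [mix, u.2]

lemma mix_bdry {A C : Finset Site} (hd : ∀ v ∈ C, v ∉ A) (σ : A → Bool) (η : C → Bool)
    (v : C) : mix A C σ η v.1 = η v := by
  simp [mix, hd v.1 v.2, v.2]

lemma bdry_disj {A : Finset Site} : ∀ v ∈ bdry A, v ∉ A := fun _ h => not_mem_of_mem_bdry h

lemma sum_sum_coe {A D : Finset Site} (G : Site → Site → ℝ) :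
    (∑ u ∈ A, ∑ v ∈ D, G u v) = ∑ u : A, ∑ v : D, G u.1 v.1 := by
  rw [← Finset.sum_coe_sort A (fun u => ∑ v ∈ D, G u v)]
  exact Finset.sum_congr rfl fun u _ => (Finset.sum_coe_sort D (G u.1)).symm

lemma energy_eq_en (β : ℝ) (A : Finset Site) (θ : bdry A → Bool) (σ : A → Bool) :
    energy β A θ σ = en β A (bdry A) (mix A (bdry A) σ θ) := by
  unfold energy en
  rw [sum_sum_coe, sum_sum_coe]
  simp only [mix_int, mix_bdry bdry_disj]

lemma rate_eq_fld (β : ℝ) (A : Finset Site) (θ : bdry A → Bool) (x : A) (σ : A → Bool) :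
    rate β A θ x σ = 1 / (1 + Real.exp (-2 * β * spin (mix A (bdry A) σ θ x.1) *
      fld A (bdry A) (mix A (bdry A) σ θ) x.1)) := by
  unfold rate fld
  rw [← Finset.sum_coe_sort A (fun y => if Adj x.1 y then spin (mix A (bdry A) σ θ y) else 0),
    ← Finset.sum_coe_sort (bdry A)
      (fun y => if Adj x.1 y then spin (mix A (bdry A) σ θ y) else 0)]
  simp only [mix_int, mix_bdry bdry_disj]

lemma en_congr {β : ℝ} {A C : Finset Site} {s s' : Site → Bool}
    (h : ∀ v, v ∈ A ∪ C → s v = s' v) : en β A C s = en β A C s' := by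
  unfold en
  have e1 : (∑ u ∈ A, ∑ v ∈ A, (if Adj u v then spin (s u) * spin (s v) else 0))
      = ∑ u ∈ A, ∑ v ∈ A, (if Adj u v then spin (s' u) * spin (s' v) else 0) :=
    Finset.sum_congr rfl fun u hu => Finset.sum_congr rfl fun v hv => by
      rw [h u (Finset.mem_union_left _ hu), h v (Finset.mem_union_left _ hv)]
  have e2 : (∑ u ∈ A, ∑ v ∈ C, (if Adj u v then spin (s u) * spin (s v) else 0))
      = ∑ u ∈ A, ∑ v ∈ C, (if Adj u v then spin (s' u) * spin (s' v) else 0) :=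
    Finset.sum_congr rfl fun u hu => Finset.sum_congr rfl fun v hv => by
      rw [h u (Finset.mem_union_left _ hu), h v (Finset.mem_union_right _ hv)]
  rw [e1, e2]

lemma fld_congr {A C : Finset Site} {s s' : Site → Bool} {x : Site}
    (h : ∀ v, v ∈ A ∪ C → s v = s' v) : fld A C s x = fld A C s' x := by
  unfold fld
  congr 1
  · exact Finset.sum_congr rfl fun v hv => by rw [h v (Finset.mem_union_left _ hv)]
  · exact Finset.sum_congr rfl fun v hv => by rw [h v (Finset.mem_union_right _ hv)]


lemma sum_adj_out {B Λ : Finset Site} (hB : B ⊆ Λ) {u : Site} (hu : u ∈ B)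
    (X : Site → ℝ) :
    (∑ v ∈ Λ \ B, if Adj u v then X v else 0)
      = ∑ v ∈ bdry B ∩ Λ, if Adj u v then X v else 0 := by
  refine (Finset.sum_subset ?_ ?_).symm
  · intro v hv
    rw [Finset.mem_inter] at hv
    exact Finset.mem_sdiff.mpr ⟨hv.2, not_mem_of_mem_bdry hv.1⟩
  · intro v hv hv'
    rw [if_neg]
    intro hadj
    rw [Finset.mem_sdiff] at hv
    exact hv' (Finset.mem_inter.mpr ⟨mem_bdry_of_adj hu hv.2 hadj, hv.1⟩)

lemma sum_adj_bdry {B Λ : Finset Site} (hB : B ⊆ Λ) {u : Site} (hu : u ∈ B)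
    (X : Site → ℝ) :
    (∑ v ∈ bdry Λ, if Adj u v then X v else 0)
      = ∑ v ∈ bdry B \ Λ, if Adj u v then X v else 0 := by
  refine (Finset.sum_subset ?_ ?_).symm
  · intro v hv
    rw [Finset.mem_sdiff] at hv
    exact bdry_sub hB hv.1 hv.2
  · intro v hv hv'
    rw [if_neg]
    intro hadj
    have hvΛ : v ∉ Λ := not_mem_of_mem_bdry hv
    exact hv' (Finset.mem_sdiff.mpr
      ⟨mem_bdry_of_adj hu (fun hvB => hvΛ (hB hvB)) hadj, hvΛ⟩)

lemma fld_split {B Λ : Finset Site} (hB : B ⊆ Λ) {x : Site} (hx : x ∈ B)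
    (s : Site → Bool) : fld Λ (bdry Λ) s x = fld B (bdry B) s x := by
  unfold fld
  have h1 : (∑ y ∈ Λ, if Adj x y then spin (s y) else 0)
      = (∑ y ∈ B, if Adj x y then spin (s y) else 0)
        + ∑ y ∈ Λ \ B, if Adj x y then spin (s y) else 0 := by
    rw [add_comm, Finset.sum_sdiff hB]
  have h2 := sum_adj_out hB hx (fun y => spin (s y))
  have h3 := sum_adj_bdry hB hx (fun y => spin (s y))
  have h4 : (∑ y ∈ bdry B, if Adj x y then spin (s y) else 0)
      = (∑ y ∈ bdry B ∩ Λ, if Adj x y then spin (s y) else 0)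
        + ∑ y ∈ bdry B \ Λ, if Adj x y then spin (s y) else 0 :=
    (Finset.sum_inter_add_sum_sdiff _ _ _).symm
  rw [h1, h2, h3, h4]
  ring

lemma en_split (β : ℝ) {B Λ : Finset Site} (hB : B ⊆ Λ) (s : Site → Bool) :
    en β Λ (bdry Λ) s = en β B (bdry B) s + en β (Λ \ B) (bdry Λ) s := by
  unfold en
  set g : Site → Site → ℝ := fun u v => if Adj u v then spin (s u) * spin (s v) else 0
    with hg
  have gsymm : ∀ u v, g u v = g v u := by
    intro u v
    simp only [hg]
    by_cases h : Adj u v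
    · rw [if_pos h, if_pos (adj_symm h), mul_comm]
    · rw [if_neg h, if_neg fun h' => h (adj_symm h')]
  have hsplitΛ : ∀ G : Site → ℝ, (∑ u ∈ Λ, G u) = (∑ u ∈ B, G u) + ∑ u ∈ Λ \ B, G u :=
    fun G => by rw [add_comm, Finset.sum_sdiff hB]
  have hAA : (∑ u ∈ Λ, ∑ v ∈ Λ, g u v)
      = ((∑ u ∈ B, ∑ v ∈ B, g u v) + ∑ u ∈ Λ \ B, ∑ v ∈ Λ \ B, g u v)
        + 2 * ∑ u ∈ B, ∑ v ∈ Λ \ B, g u v := by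
    rw [hsplitΛ (fun u => ∑ v ∈ Λ, g u v)]
    have i1 : (∑ u ∈ B, ∑ v ∈ Λ, g u v)
        = (∑ u ∈ B, ∑ v ∈ B, g u v) + ∑ u ∈ B, ∑ v ∈ Λ \ B, g u v := by
      rw [← Finset.sum_add_distrib]
      exact Finset.sum_congr rfl fun u _ => hsplitΛ (g u)
    have i2 : (∑ u ∈ Λ \ B, ∑ v ∈ Λ, g u v)
        = (∑ u ∈ Λ \ B, ∑ v ∈ B, g u v) + ∑ u ∈ Λ \ B, ∑ v ∈ Λ \ B, g u v := by
      rw [← Finset.sum_add_distrib]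
      exact Finset.sum_congr rfl fun u _ => hsplitΛ (g u)
    have i3 : (∑ u ∈ Λ \ B, ∑ v ∈ B, g u v) = ∑ u ∈ B, ∑ v ∈ Λ \ B, g u v := by
      rw [Finset.sum_comm]
      exact Finset.sum_congr rfl fun u _ => Finset.sum_congr rfl fun v _ => gsymm v u
    rw [i1, i2, i3]
    ring
  have hAC : (∑ u ∈ Λ, ∑ v ∈ bdry Λ, g u v)
      = (∑ u ∈ B, ∑ v ∈ bdry Λ, g u v) + ∑ u ∈ Λ \ B, ∑ v ∈ bdry Λ, g u v :=
    hsplitΛ _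
  have hBB : (∑ u ∈ B, ∑ v ∈ bdry B, g u v)
      = (∑ u ∈ B, ∑ v ∈ Λ \ B, g u v) + ∑ u ∈ B, ∑ v ∈ bdry Λ, g u v := by
    rw [← Finset.sum_add_distrib]
    refine Finset.sum_congr rfl fun u hu => ?_
    rw [sum_adj_out hB hu (fun v => spin (s u) * spin (s v)),
      sum_adj_bdry hB hu (fun v => spin (s u) * spin (s v))]
    exact (Finset.sum_inter_add_sum_sdiff _ _ _).symm
  rw [hAA, hAC, hBB]
  ring


/-- Configurations outside a block. -/
def OutT (Λ B : Finset Site) : Type := {x : Λ // (x : Site) ∉ B}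

noncomputable instance (Λ B : Finset Site) : Fintype (OutT Λ B) := by
  unfold OutT; infer_instance

instance (Λ B : Finset Site) : DecidableEq (OutT Λ B) := by
  unfold OutT; infer_instance

/-- Glue a block configuration with an outside configuration. -/
noncomputable def glue (Λ B : Finset Site) (ζ : B → Bool) (o : OutT Λ B → Bool) :
    Λ → Bool :=
  fun x => if h : (x : Site) ∈ B then ζ ⟨x, h⟩ else o ⟨x, h⟩

lemma glue_mem {Λ B : Finset Site} (ζ : B → Bool) (o : OutT Λ B → Bool) (x : Λ)
    (h : (x : Site) ∈ B) : glue Λ B ζ o x = ζ ⟨x, h⟩ := dif_pos h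

lemma glue_not_mem {Λ B : Finset Site} (ζ : B → Bool) (o : OutT Λ B → Bool) (x : Λ)
    (h : (x : Site) ∉ B) : glue Λ B ζ o x = o ⟨x, h⟩ := dif_neg h

/-- The bijection between pairs (block config, outside config) and full configs. -/
noncomputable def cfgEquiv (Λ B : Finset Site) (hB : B ⊆ Λ) :
    ((B → Bool) × (OutT Λ B → Bool)) ≃ (Λ → Bool) where
  toFun p := glue Λ B p.1 p.2
  invFun σ := (fun y => σ ⟨y.1, hB y.2⟩, fun x => σ x.1)
  left_inv p := by
    obtain ⟨ζ, o⟩ := p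
    refine Prod.ext ?_ ?_
    · funext y
      show glue Λ B ζ o ⟨y.1, hB y.2⟩ = ζ y
      rw [glue_mem ζ o _ y.2]
    · funext x
      show glue Λ B ζ o x.1 = o x
      rw [glue_not_mem ζ o _ x.2]
      rfl
  right_inv σ := by
    funext x
    by_cases h : (x : Site) ∈ B
    · show glue Λ B _ _ x = σ x
      rw [glue_mem _ _ _ h]
    · show glue Λ B _ _ x = σ x
      rw [glue_not_mem _ _ _ h]

lemma sum_glue (Λ B : Finset Site) (hB : B ⊆ Λ) (F : (Λ → Bool) → ℝ) :
    (∑ σ : Λ → Bool, F σ)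
      = ∑ o : OutT Λ B → Bool, ∑ ζ : B → Bool, F (glue Λ B ζ o) := by
  rw [← Equiv.sum_comp (cfgEquiv Λ B hB) F, Fintype.sum_prod_type_right]
  rfl

lemma glue_eq_glue_iff {Λ B : Finset Site} (hB : B ⊆ Λ) (ζ ζ' : B → Bool)
    (o o' : OutT Λ B → Bool) :
    (∀ x : Λ, (x : Site) ∉ B → glue Λ B ζ' o' x = glue Λ B ζ o x) ↔ o' = o := by
  constructor
  · intro h
    funext x
    have := h x.1 x.2
    rwa [glue_not_mem, glue_not_mem] at this
  · intro h x hx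
    rw [h, glue_not_mem _ _ _ hx, glue_not_mem _ _ _ hx]

lemma sum_agree {Λ B : Finset Site} (hB : B ⊆ Λ) (ζ : B → Bool) (o : OutT Λ B → Bool)
    (h : (Λ → Bool) → ℝ) :
    (∑ σ' : Λ → Bool,
        if ∀ x : Λ, (x : Site) ∉ B → σ' x = glue Λ B ζ o x then h σ' else 0)
      = ∑ ζ' : B → Bool, h (glue Λ B ζ' o) := by
  rw [sum_glue Λ B hB, Finset.sum_comm]
  refine Finset.sum_congr rfl fun ζ' _ => ?_
  have : ∀ o' : OutT Λ B → Bool,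
      (if ∀ x : Λ, (x : Site) ∉ B → glue Λ B ζ' o' x = glue Λ B ζ o x
        then h (glue Λ B ζ' o') else 0)
      = if o' = o then h (glue Λ B ζ' o') else 0 := fun o' =>
    if_congr (glue_eq_glue_iff hB ζ ζ' o o') rfl rfl
  rw [Finset.sum_congr rfl fun o' _ => this o']
  simp


/-- Boundary condition on a block induced by an outside configuration. -/
noncomputable def bcond {Λ B : Finset Site} (hB : B ⊆ Λ) (τ : bdry Λ → Bool)
    (o : OutT Λ B → Bool) : bdry B → Bool :=
  fun v => if h : (v : Site) ∈ Λ then o ⟨⟨v.1, h⟩, not_mem_of_mem_bdry v.2⟩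
    else τ ⟨v.1, bdry_sub hB v.2 h⟩

lemma mix_agree {Λ B : Finset Site} (hB : B ⊆ Λ) (τ : bdry Λ → Bool) (ζ : B → Bool)
    (o : OutT Λ B → Bool) :
    ∀ v, v ∈ B ∪ bdry B →
      mix B (bdry B) ζ (bcond hB τ o) v = mix Λ (bdry Λ) (glue Λ B ζ o) τ v := by
  intro v hv
  rcases Finset.mem_union.mp hv with hvB | hvb
  · have h1 : mix B (bdry B) ζ (bcond hB τ o) v = ζ ⟨v, hvB⟩ := mix_int ζ _ ⟨v, hvB⟩
    have h2 : mix Λ (bdry Λ) (glue Λ B ζ o) τ v = glue Λ B ζ o ⟨v, hB hvB⟩ :=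
      mix_int _ τ ⟨v, hB hvB⟩
    rw [h1, h2, glue_mem ζ o _ hvB]
  · have h1 : mix B (bdry B) ζ (bcond hB τ o) v = bcond hB τ o ⟨v, hvb⟩ :=
      mix_bdry bdry_disj ζ _ ⟨v, hvb⟩
    rw [h1]
    by_cases hΛ : v ∈ Λ
    · have h2 : mix Λ (bdry Λ) (glue Λ B ζ o) τ v = glue Λ B ζ o ⟨v, hΛ⟩ :=
        mix_int _ τ ⟨v, hΛ⟩
      rw [h2, glue_not_mem ζ o _ (not_mem_of_mem_bdry hvb), bcond, dif_pos hΛ]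
    · have hvbΛ : v ∈ bdry Λ := bdry_sub hB hvb hΛ
      have h2 : mix Λ (bdry Λ) (glue Λ B ζ o) τ v = τ ⟨v, hvbΛ⟩ :=
        mix_bdry bdry_disj _ τ ⟨v, hvbΛ⟩
      rw [h2, bcond, dif_neg hΛ]

lemma mix_out_agree {Λ B : Finset Site} (hB : B ⊆ Λ) (τ : bdry Λ → Bool)
    (ζ ζ' : B → Bool) (o : OutT Λ B → Bool) :
    ∀ v, v ∈ (Λ \ B) ∪ bdry Λ →
      mix Λ (bdry Λ) (glue Λ B ζ' o) τ v = mix Λ (bdry Λ) (glue Λ B ζ o) τ v := by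
  intro v hv
  rcases Finset.mem_union.mp hv with hvO | hvb
  · rw [Finset.mem_sdiff] at hvO
    have h1 : ∀ ξ : B → Bool, mix Λ (bdry Λ) (glue Λ B ξ o) τ v = glue Λ B ξ o ⟨v, hvO.1⟩ :=
      fun ξ => mix_int _ τ ⟨v, hvO.1⟩
    rw [h1, h1, glue_not_mem ζ o _ hvO.2, glue_not_mem ζ' o _ hvO.2]
  · have h1 : ∀ ξ : B → Bool, mix Λ (bdry Λ) (glue Λ B ξ o) τ v = τ ⟨v, hvb⟩ :=
      fun ξ => mix_bdry bdry_disj _ τ ⟨v, hvb⟩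
    rw [h1, h1]

/-- Energy splitting via the induced boundary condition. -/
lemma energy_glue {Λ B : Finset Site} (hB : B ⊆ Λ) (β : ℝ) (τ : bdry Λ → Bool)
    (ζ ζ' : B → Bool) (o : OutT Λ B → Bool) :
    energy β Λ τ (glue Λ B ζ' o)
      = energy β B (bcond hB τ o) ζ'
        + en β (Λ \ B) (bdry Λ) (mix Λ (bdry Λ) (glue Λ B ζ o) τ) := by
  rw [energy_eq_en, en_split β hB, energy_eq_en]
  rw [en_congr (mix_agree hB τ ζ' o), en_congr (mix_out_agree hB τ ζ ζ' o)]


lemma gibbs_pos {β : ℝ} {A : Finset Site} {θ : bdry A → Bool} (σ : A → Bool) :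
    0 < gibbs β A θ σ := by
  unfold gibbs
  have hden : 0 < ∑ σ' : A → Bool, Real.exp (energy β A θ σ') :=
    Finset.sum_pos (fun _ _ => Real.exp_pos _) Finset.univ_nonempty
  exact div_pos (Real.exp_pos _) hden

lemma gibbs_sum_one {β : ℝ} {A : Finset Site} {θ : bdry A → Bool} :
    (∑ σ : A → Bool, gibbs β A θ σ) = 1 := by
  unfold gibbs
  rw [← Finset.sum_div]
  exact div_self (ne_of_gt (Finset.sum_pos (fun _ _ => Real.exp_pos _) Finset.univ_nonempty))

/-- Total weight of a fiber. -/
noncomputable def wgt (β : ℝ) (Λ B : Finset Site) (τ : bdry Λ → Bool)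
    (o : OutT Λ B → Bool) : ℝ :=
  ∑ ζ' : B → Bool, gibbs β Λ τ (glue Λ B ζ' o)

lemma wgt_pos {β : ℝ} {Λ B : Finset Site} {τ : bdry Λ → Bool} (o : OutT Λ B → Bool) :
    0 < wgt β Λ B τ o :=
  Finset.sum_pos (fun ζ' _ => gibbs_pos _) Finset.univ_nonempty

/-- Key factorization: the Gibbs weight of a glued configuration. -/
lemma gibbs_glue {Λ B : Finset Site} (hB : B ⊆ Λ) (β : ℝ) (τ : bdry Λ → Bool)
    (ζ : B → Bool) (o : OutT Λ B → Bool) :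
    gibbs β Λ τ (glue Λ B ζ o) = wgt β Λ B τ o * gibbs β B (bcond hB τ o) ζ := by
  set R := en β (Λ \ B) (bdry Λ) (mix Λ (bdry Λ) (glue Λ B ζ o) τ) with hR
  have hE : ∀ ζ' : B → Bool,
      energy β Λ τ (glue Λ B ζ' o) = energy β B (bcond hB τ o) ζ' + R :=
    fun ζ' => energy_glue hB β τ ζ ζ' o
  have hZΛ : 0 < ∑ σ' : Λ → Bool, Real.exp (energy β Λ τ σ') :=
    Finset.sum_pos (fun _ _ => Real.exp_pos _) Finset.univ_nonempty
  have hZB : 0 < ∑ ζ' : B → Bool, Real.exp (energy β B (bcond hB τ o) ζ') :=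
    Finset.sum_pos (fun _ _ => Real.exp_pos _) Finset.univ_nonempty
  have hw : wgt β Λ B τ o
      = (∑ ζ' : B → Bool, Real.exp (energy β B (bcond hB τ o) ζ')) * Real.exp R
        / ∑ σ' : Λ → Bool, Real.exp (energy β Λ τ σ') := by
    unfold wgt gibbs
    rw [← Finset.sum_div, Finset.sum_mul]
    congr 1
    exact Finset.sum_congr rfl fun ζ' _ => by rw [hE ζ', Real.exp_add]
  unfold gibbs
  rw [hw, hE ζ, Real.exp_add]
  field_simp

/-- The block kernel applied to a glued configuration gives the block Gibbs average. -/
lemma kernel_avg {Λ B : Finset Site} (hB : B ⊆ Λ) (β : ℝ) (τ : bdry Λ → Bool)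
    (ζ : B → Bool) (o : OutT Λ B → Bool) (f : (Λ → Bool) → ℝ) :
    (∑ σ' : Λ → Bool, blockKernel β Λ τ B (glue Λ B ζ o) σ' * f σ')
      = ∑ ζ' : B → Bool, gibbs β B (bcond hB τ o) ζ' * f (glue Λ B ζ' o) := by
  unfold blockKernel
  have h1 : (∑ σ'' : Λ → Bool,
      if ∀ x : Λ, (x : Site) ∉ B → σ'' x = glue Λ B ζ o x then gibbs β Λ τ σ'' else 0)
      = wgt β Λ B τ o := sum_agree hB ζ o (gibbs β Λ τ)
  have h2 : ∀ σ' : Λ → Bool,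
      (if ∀ x : Λ, (x : Site) ∉ B → σ' x = glue Λ B ζ o x then
        gibbs β Λ τ σ' / wgt β Λ B τ o else 0) * f σ'
      = if ∀ x : Λ, (x : Site) ∉ B → σ' x = glue Λ B ζ o x then
          gibbs β Λ τ σ' / wgt β Λ B τ o * f σ' else 0 := fun σ' => by
    split <;> simp
  rw [h1, Finset.sum_congr rfl fun σ' _ => h2 σ',
    sum_agree hB ζ o (fun σ' => gibbs β Λ τ σ' / wgt β Λ B τ o * f σ')]
  refine Finset.sum_congr rfl fun ζ' _ => ?_
  rw [gibbs_glue hB β τ ζ' o]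
  field_simp [ne_of_gt (wgt_pos o)]


/-- Rate identity: inside a block the rate only sees the induced boundary condition. -/
lemma rate_glue {Λ B : Finset Site} (hB : B ⊆ Λ) (β : ℝ) (τ : bdry Λ → Bool)
    (ζ : B → Bool) (o : OutT Λ B → Bool) (y : B) :
    rate β B (bcond hB τ o) y ζ = rate β Λ τ ⟨y.1, hB y.2⟩ (glue Λ B ζ o) := by
  rw [rate_eq_fld, rate_eq_fld]
  have hx : (⟨y.1, hB y.2⟩ : Λ).1 = y.1 := rfl
  rw [hx]
  have h1 : mix B (bdry B) ζ (bcond hB τ o) y.1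
      = mix Λ (bdry Λ) (glue Λ B ζ o) τ y.1 :=
    mix_agree hB τ ζ o y.1 (Finset.mem_union_left _ y.2)
  have h2 : fld B (bdry B) (mix B (bdry B) ζ (bcond hB τ o)) y.1
      = fld Λ (bdry Λ) (mix Λ (bdry Λ) (glue Λ B ζ o) τ) y.1 := by
    rw [fld_congr (mix_agree hB τ ζ o), fld_split hB y.2]
  rw [h1, h2]

/-- Flipping commutes with gluing. -/
lemma glue_flip {Λ B : Finset Site} (hB : B ⊆ Λ) (ζ : B → Bool) (o : OutT Λ B → Bool)
    (y : B) :
    flipAt Λ (glue Λ B ζ o) ⟨y.1, hB y.2⟩ = glue Λ B (flipAt B ζ y) o := by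
  funext x
  unfold flipAt
  by_cases hxy : x = (⟨y.1, hB y.2⟩ : Λ)
  · subst hxy
    rw [Function.update_self,
      glue_mem (Function.update ζ y (!ζ y)) o (⟨y.1, hB y.2⟩ : Λ) y.2,
      glue_mem ζ o (⟨y.1, hB y.2⟩ : Λ) y.2]
    exact (Function.update_self y (!ζ ⟨(⟨y.1, hB y.2⟩ : Λ).1, y.2⟩) ζ).symm
  · rw [Function.update_of_ne hxy]
    by_cases hxB : (x : Site) ∈ B
    · rw [glue_mem (Function.update ζ y (!ζ y)) o x hxB, glue_mem ζ o x hxB]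
      have hne : (⟨(x : Site), hxB⟩ : B) ≠ y := by
        intro he
        exact hxy (Subtype.ext (by rw [← he]))
      rw [Function.update_of_ne hne]
    · rw [glue_not_mem (Function.update ζ y (!ζ y)) o x hxB, glue_not_mem ζ o x hxB]

/-- Reindexing a sum over block sites as a sum over all sites of `Λ`. -/
lemma sum_block_sites {Λ B : Finset Site} (hB : B ⊆ Λ) (G : Λ → ℝ) :
    (∑ y : B, G ⟨y.1, hB y.2⟩) = ∑ x : Λ, if (x : Site) ∈ B then G x else 0 := by
  rw [← Finset.sum_filter,
    ← Finset.sum_coe_sort (Finset.univ.filter (fun x : Λ => (x : Site) ∈ B)) G]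
  refine Fintype.sum_bijective
    (fun y : {v // v ∈ B} =>
      (⟨⟨y.1, hB y.2⟩, Finset.mem_filter.mpr ⟨Finset.mem_univ _, y.2⟩⟩ :
        {x : Λ // x ∈ Finset.univ.filter (fun x : Λ => (x : Site) ∈ B)}))
    ⟨fun a b hab => Subtype.ext (congrArg (fun z => z.1.1) hab), fun z =>
      ⟨⟨z.1.1, (Finset.mem_filter.mp z.2).2⟩, Subtype.ext (Subtype.ext rfl)⟩⟩
    _ _ (fun y => rfl)


lemma rate_nonneg {β : ℝ} {A : Finset Site} {θ : bdry A → Bool} (x : A) (σ : A → Bool) :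
    0 ≤ rate β A θ x σ := by
  unfold rate
  positivity

lemma dirichlet_nonneg {β : ℝ} {A : Finset Site} {θ : bdry A → Bool}
    (f : (A → Bool) → ℝ) : 0 ≤ dirichlet β A θ f := by
  unfold dirichlet
  have : ∀ σ : A → Bool, 0 ≤ ∑ x : A,
      gibbs β A θ σ * rate β A θ x σ * (f (flipAt A σ x) - f σ) ^ 2 := fun σ =>
    Finset.sum_nonneg fun x _ =>
      mul_nonneg (mul_nonneg (le_of_lt (gibbs_pos σ)) (rate_nonneg x σ)) (sq_nonneg _)
  exact mul_nonneg (by norm_num) (Finset.sum_nonneg fun σ _ => this σ)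

lemma isingVar_nonneg {β : ℝ} {A : Finset Site} {θ : bdry A → Bool}
    (f : (A → Bool) → ℝ) : 0 ≤ isingVar β A θ f :=
  Finset.sum_nonneg fun σ _ => mul_nonneg (le_of_lt (gibbs_pos σ)) (sq_nonneg _)

lemma isingVar_pos {β : ℝ} {A : Finset Site} {θ : bdry A → Bool} {f : (A → Bool) → ℝ}
    (h : ∃ σ σ', f σ ≠ f σ') : 0 < isingVar β A θ f := by
  rcases lt_or_eq_of_le (isingVar_nonneg (β := β) (A := A) (θ := θ) f) with h' | h'
  · exact h'
  exfalso
  have hz := h'.symm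
  unfold isingVar at hz
  rw [Finset.sum_eq_zero_iff_of_nonneg
    (fun σ _ => mul_nonneg (le_of_lt (gibbs_pos σ)) (sq_nonneg _))] at hz
  obtain ⟨σ, σ', hne⟩ := h
  have hc : ∀ σ'' : A → Bool,
      f σ'' = ∑ σ''' : A → Bool, gibbs β A θ σ''' * f σ''' := by
    intro σ''
    have := hz σ'' (Finset.mem_univ _)
    rcases mul_eq_zero.mp this with h1 | h1
    · exact absurd h1 (ne_of_gt (gibbs_pos σ''))
    · have := sq_eq_zero_iff.mp h1
      linarith
  exact hne (by rw [hc σ, hc σ'])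

lemma gap_set_nonneg {β : ℝ} {A : Finset Site} {θ : bdry A → Bool} :
    ∀ g ∈ {g : ℝ | ∃ f : (A → Bool) → ℝ, (∃ σ σ', f σ ≠ f σ') ∧
      g = dirichlet β A θ f / isingVar β A θ f}, 0 ≤ g := by
  rintro g ⟨f, _, rfl⟩
  exact div_nonneg (dirichlet_nonneg f) (isingVar_nonneg f)

lemma gap_nonneg (β : ℝ) (A : Finset Site) (θ : bdry A → Bool) : 0 ≤ gap β A θ :=
  Real.sInf_nonneg gap_set_nonneg

lemma isingVar_const {β : ℝ} {A : Finset Site} {θ : bdry A → Bool} {f : (A → Bool) → ℝ}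
    (h : ∀ σ σ', f σ = f σ') : isingVar β A θ f = 0 := by
  unfold isingVar
  have σ₀ : A → Bool := fun _ => false
  have hm : (∑ σ' : A → Bool, gibbs β A θ σ' * f σ') = f σ₀ := by
    rw [Finset.sum_congr rfl fun σ' _ => by rw [h σ' σ₀], ← Finset.sum_mul, gibbs_sum_one,
      one_mul]
  refine Finset.sum_eq_zero fun σ _ => ?_
  rw [hm, h σ σ₀]
  simp

/-- The fundamental variational inequality for the single-site gap. -/
lemma gap_mul_var_le (β : ℝ) (A : Finset Site) (θ : bdry A → Bool)
    (f : (A → Bool) → ℝ) :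
    gap β A θ * isingVar β A θ f ≤ dirichlet β A θ f := by
  by_cases h : ∃ σ σ', f σ ≠ f σ'
  · have hmem : dirichlet β A θ f / isingVar β A θ f ∈
        {g : ℝ | ∃ f : (A → Bool) → ℝ, (∃ σ σ', f σ ≠ f σ') ∧
          g = dirichlet β A θ f / isingVar β A θ f} := ⟨f, h, rfl⟩
    have hle : gap β A θ ≤ dirichlet β A θ f / isingVar β A θ f :=
      csInf_le ⟨0, fun g hg => gap_set_nonneg g hg⟩ hmem
    have hV : 0 < isingVar β A θ f := isingVar_pos h
    calc gap β A θ * isingVar β A θ f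
        ≤ dirichlet β A θ f / isingVar β A θ f * isingVar β A θ f :=
          mul_le_mul_of_nonneg_right hle (le_of_lt hV)
      _ = dirichlet β A θ f := div_mul_cancel₀ _ (ne_of_gt hV)
  · push_neg at h
    rw [isingVar_const fun σ σ' => h σ σ', mul_zero]
    exact dirichlet_nonneg f

/-- Variance identity: `∑ p g (g - m) = ∑ p (g - m)²` for a probability vector `p`. -/
lemma sum_mul_sub_mean {ι : Type*} [Fintype ι] (p g : ι → ℝ) (hp : ∑ x : ι, p x = 1) :
    (∑ x : ι, p x * g x * (g x - ∑ y : ι, p y * g y))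
      = ∑ x : ι, p x * (g x - ∑ y : ι, p y * g y) ^ 2 := by
  set m := ∑ y : ι, p y * g y with hm
  have key : ∀ x, p x * (g x - m) ^ 2 = p x * g x * (g x - m) - m * (p x * g x - p x * m) :=
    fun x => by ring
  rw [Finset.sum_congr rfl fun x _ => key x, Finset.sum_sub_distrib, ← Finset.mul_sum,
    Finset.sum_sub_distrib, ← hm, ← Finset.sum_mul, hp]
  ring


/-- Decomposition of one block term of the block Dirichlet form into fiber variances. -/
lemma blockTerm_eq {Λ B : Finset Site} (hB : B ⊆ Λ) (β : ℝ) (τ : bdry Λ → Bool)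
    (f : (Λ → Bool) → ℝ) :
    (∑ σ : Λ → Bool, gibbs β Λ τ σ * f σ *
        (f σ - ∑ σ' : Λ → Bool, blockKernel β Λ τ B σ σ' * f σ'))
      = ∑ o : OutT Λ B → Bool, wgt β Λ B τ o *
          isingVar β B (bcond hB τ o) (fun ζ => f (glue Λ B ζ o)) := by
  rw [sum_glue Λ B hB (fun σ => gibbs β Λ τ σ * f σ *
    (f σ - ∑ σ' : Λ → Bool, blockKernel β Λ τ B σ σ' * f σ'))]
  refine Finset.sum_congr rfl fun o _ => ?_
  set p : (B → Bool) → ℝ := gibbs β B (bcond hB τ o) with hp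
  set g : (B → Bool) → ℝ := fun ζ => f (glue Λ B ζ o) with hg
  have h1 : ∀ ζ : B → Bool,
      gibbs β Λ τ (glue Λ B ζ o) * f (glue Λ B ζ o) *
        (f (glue Λ B ζ o) - ∑ σ' : Λ → Bool, blockKernel β Λ τ B (glue Λ B ζ o) σ' * f σ')
      = wgt β Λ B τ o * (p ζ * g ζ * (g ζ - ∑ ζ' : B → Bool, p ζ' * g ζ')) := by
    intro ζ
    rw [kernel_avg hB β τ ζ o f, gibbs_glue hB β τ ζ o]
    ring
  rw [Finset.sum_congr rfl fun ζ _ => h1 ζ, ← Finset.mul_sum,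
    sum_mul_sub_mean p g gibbs_sum_one]
  rfl

/-- Rewriting the fiber Dirichlet forms as a restricted single-site Dirichlet form. -/
lemma fiberDirichlet_eq {Λ B : Finset Site} (hB : B ⊆ Λ) (β : ℝ) (τ : bdry Λ → Bool)
    (f : (Λ → Bool) → ℝ) :
    (∑ o : OutT Λ B → Bool, wgt β Λ B τ o *
        dirichlet β B (bcond hB τ o) (fun ζ => f (glue Λ B ζ o)))
      = ∑ σ : Λ → Bool, ∑ x : Λ, if (x : Site) ∈ B then
          (1 / 2) * (gibbs β Λ τ σ * rate β Λ τ x σ * (f (flipAt Λ σ x) - f σ) ^ 2)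
        else 0 := by
  rw [sum_glue Λ B hB (fun σ => ∑ x : Λ, if (x : Site) ∈ B then
    (1 / 2) * (gibbs β Λ τ σ * rate β Λ τ x σ * (f (flipAt Λ σ x) - f σ) ^ 2) else 0)]
  refine Finset.sum_congr rfl fun o _ => ?_
  unfold dirichlet
  rw [← mul_assoc, Finset.mul_sum]
  refine Finset.sum_congr rfl fun ζ _ => ?_
  rw [Finset.mul_sum,
    ← sum_block_sites hB (fun x => (1 / 2) * (gibbs β Λ τ (glue Λ B ζ o) *
      rate β Λ τ x (glue Λ B ζ o) *
      (f (flipAt Λ (glue Λ B ζ o) x) - f (glue Λ B ζ o)) ^ 2))]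
  refine Finset.sum_congr rfl fun y _ => ?_
  rw [gibbs_glue hB β τ ζ o, rate_glue hB β τ ζ o y, glue_flip hB ζ o y]
  ring


lemma blockDirichlet_eq (β : ℝ) (Λ : Finset Site) (τ : bdry Λ → Bool) {k : ℕ}
    (𝓑 : Fin k → Finset Site) (hsub : ∀ i, 𝓑 i ⊆ Λ) (f : (Λ → Bool) → ℝ) :
    blockDirichlet β Λ τ 𝓑 f
      = ∑ i : Fin k, ∑ o : OutT Λ (𝓑 i) → Bool, wgt β Λ (𝓑 i) τ o *
          isingVar β (𝓑 i) (bcond (hsub i) τ o) (fun ζ => f (glue Λ (𝓑 i) ζ o)) :=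
  Finset.sum_congr rfl fun i _ => blockTerm_eq (hsub i) β τ f

lemma blockDirichlet_nonneg (β : ℝ) (Λ : Finset Site) (τ : bdry Λ → Bool) {k : ℕ}
    (𝓑 : Fin k → Finset Site) (hsub : ∀ i, 𝓑 i ⊆ Λ) (f : (Λ → Bool) → ℝ) :
    0 ≤ blockDirichlet β Λ τ 𝓑 f := by
  rw [blockDirichlet_eq β Λ τ 𝓑 hsub f]
  exact Finset.sum_nonneg fun i _ => Finset.sum_nonneg fun o _ =>
    mul_nonneg (le_of_lt (wgt_pos o)) (isingVar_nonneg _)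

lemma blockGap_mul_var_le (β : ℝ) (Λ : Finset Site) (τ : bdry Λ → Bool) {k : ℕ}
    (𝓑 : Fin k → Finset Site) (hsub : ∀ i, 𝓑 i ⊆ Λ) (f : (Λ → Bool) → ℝ) :
    blockGap β Λ τ 𝓑 * isingVar β Λ τ f ≤ blockDirichlet β Λ τ 𝓑 f := by
  have hbdd : ∀ g ∈ {g : ℝ | ∃ f : (Λ → Bool) → ℝ, (∃ σ σ', f σ ≠ f σ') ∧
      g = blockDirichlet β Λ τ 𝓑 f / isingVar β Λ τ f}, (0:ℝ) ≤ g := by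
    rintro g ⟨f', _, rfl⟩
    exact div_nonneg (blockDirichlet_nonneg β Λ τ 𝓑 hsub f') (isingVar_nonneg f')
  by_cases h : ∃ σ σ', f σ ≠ f σ'
  · have hle : blockGap β Λ τ 𝓑 ≤ blockDirichlet β Λ τ 𝓑 f / isingVar β Λ τ f :=
      csInf_le ⟨0, fun g hg => hbdd g hg⟩ ⟨f, h, rfl⟩
    have hV : 0 < isingVar β Λ τ f := isingVar_pos h
    calc blockGap β Λ τ 𝓑 * isingVar β Λ τ f
        ≤ blockDirichlet β Λ τ 𝓑 f / isingVar β Λ τ f * isingVar β Λ τ f :=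
          mul_le_mul_of_nonneg_right hle (le_of_lt hV)
      _ = blockDirichlet β Λ τ 𝓑 f := div_mul_cancel₀ _ (ne_of_gt hV)
  · push_neg at h
    rw [isingVar_const fun σ σ' => h σ σ', mul_zero]
    exact blockDirichlet_nonneg β Λ τ 𝓑 hsub f

end Stmt5Aux

open Stmt5Aux in
theorem stmt5 (β : ℝ) (Λ : Finset Site) (τ : bdry Λ → Bool)
    (k : ℕ) (𝓑 : Fin k → Finset Site)
    (hsub : ∀ i, 𝓑 i ⊆ Λ) (hcover : ∀ x ∈ Λ, ∃ i, x ∈ 𝓑 i) :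
    gap β Λ τ ≥
      ((Λ.sup fun x => (Finset.univ.filter fun i : Fin k => x ∈ 𝓑 i).card : ℕ) : ℝ)⁻¹
        * blockGap β Λ τ 𝓑
        * ⨅ i : Fin k, ⨅ φ : bdry (𝓑 i) → Bool, gap β (𝓑 i) φ := by
  classical
  set χn : ℕ := Λ.sup fun x => (Finset.univ.filter fun i : Fin k => x ∈ 𝓑 i).card with hχ
  set γ : ℝ := ⨅ i : Fin k, ⨅ φ : bdry (𝓑 i) → Bool, gap β (𝓑 i) φ with hγdef
  by_cases hΛ : Λ.Nonempty
  swap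
  · rw [Finset.not_nonempty_iff_eq_empty] at hΛ
    have h0 : χn = 0 := by rw [hχ, hΛ]; rfl
    rw [ge_iff_le, h0]
    simp only [Nat.cast_zero, inv_zero, zero_mul]
    exact gap_nonneg β Λ τ
  obtain ⟨x₀, hx₀⟩ := hΛ
  obtain ⟨i₀, hi₀⟩ := hcover x₀ hx₀
  have hχ1 : 1 ≤ χn := by
    refine le_trans ?_ (Finset.le_sup hx₀)
    rw [Nat.succ_le_iff, Finset.card_pos]
    exact ⟨i₀, Finset.mem_filter.mpr ⟨Finset.mem_univ _, hi₀⟩⟩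
  have hχpos : (0:ℝ) < (χn : ℝ) := by exact_mod_cast Nat.lt_of_lt_of_le Nat.zero_lt_one hχ1
  have hγ0 : 0 ≤ γ := by
    rw [hγdef]
    exact Real.iInf_nonneg fun i => Real.iInf_nonneg fun φ => gap_nonneg β (𝓑 i) φ
  have hγle : ∀ (i : Fin k) (φ : bdry (𝓑 i) → Bool), γ ≤ gap β (𝓑 i) φ := by
    intro i φ
    rw [hγdef]
    refine le_trans (ciInf_le ⟨0, ?_⟩ i) (ciInf_le ⟨0, ?_⟩ φ)
    · rintro g ⟨i', rfl⟩
      exact Real.iInf_nonneg fun φ' => gap_nonneg β (𝓑 i') φ'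
    · rintro g ⟨φ', rfl⟩
      exact gap_nonneg β (𝓑 i) φ'
  -- the key inequality for every observable f
  have hkey : ∀ f : (Λ → Bool) → ℝ,
      γ * blockDirichlet β Λ τ 𝓑 f ≤ (χn : ℝ) * dirichlet β Λ τ f := by
    intro f
    have hstep1 : γ * blockDirichlet β Λ τ 𝓑 f
        ≤ ∑ i : Fin k, ∑ o : OutT Λ (𝓑 i) → Bool, wgt β Λ (𝓑 i) τ o *
            dirichlet β (𝓑 i) (bcond (hsub i) τ o) (fun ζ => f (glue Λ (𝓑 i) ζ o)) := by
      rw [blockDirichlet_eq β Λ τ 𝓑 hsub f, Finset.mul_sum]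
      refine Finset.sum_le_sum fun i _ => ?_
      rw [Finset.mul_sum]
      refine Finset.sum_le_sum fun o _ => ?_
      have h1 : γ * (wgt β Λ (𝓑 i) τ o *
          isingVar β (𝓑 i) (bcond (hsub i) τ o) (fun ζ => f (glue Λ (𝓑 i) ζ o)))
          = wgt β Λ (𝓑 i) τ o * (γ *
            isingVar β (𝓑 i) (bcond (hsub i) τ o) (fun ζ => f (glue Λ (𝓑 i) ζ o))) := by
        ring
      rw [h1]
      refine mul_le_mul_of_nonneg_left ?_ (le_of_lt (wgt_pos o))
      refine le_trans ?_ (gap_mul_var_le β (𝓑 i) (bcond (hsub i) τ o) _)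
      exact mul_le_mul_of_nonneg_right (hγle i _) (isingVar_nonneg _)
    have hstep2 : (∑ i : Fin k, ∑ o : OutT Λ (𝓑 i) → Bool, wgt β Λ (𝓑 i) τ o *
          dirichlet β (𝓑 i) (bcond (hsub i) τ o) (fun ζ => f (glue Λ (𝓑 i) ζ o)))
        ≤ (χn : ℝ) * dirichlet β Λ τ f := by
      rw [Finset.sum_congr rfl fun i _ => fiberDirichlet_eq (hsub i) β τ f]
      rw [Finset.sum_comm]
      have hQ : ∀ σ : Λ → Bool, ∀ x : Λ,
          0 ≤ (1 / 2) * (gibbs β Λ τ σ * rate β Λ τ x σ * (f (flipAt Λ σ x) - f σ) ^ 2) :=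
        fun σ x => mul_nonneg (by norm_num)
          (mul_nonneg (mul_nonneg (le_of_lt (gibbs_pos σ)) (rate_nonneg x σ)) (sq_nonneg _))
      have hD : (∑ σ : Λ → Bool, ∑ x : Λ,
          (1 / 2) * (gibbs β Λ τ σ * rate β Λ τ x σ * (f (flipAt Λ σ x) - f σ) ^ 2))
          = dirichlet β Λ τ f := by
        unfold dirichlet
        rw [Finset.mul_sum]
        exact Finset.sum_congr rfl fun σ _ => (Finset.mul_sum _ _ _).symm
      calc (∑ σ : Λ → Bool, ∑ i : Fin k, ∑ x : Λ, if (x : Site) ∈ 𝓑 i then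
              (1 / 2) * (gibbs β Λ τ σ * rate β Λ τ x σ * (f (flipAt Λ σ x) - f σ) ^ 2)
            else 0)
          ≤ ∑ σ : Λ → Bool, ∑ x : Λ, (χn : ℝ) *
              ((1 / 2) * (gibbs β Λ τ σ * rate β Λ τ x σ * (f (flipAt Λ σ x) - f σ) ^ 2)) := by
            refine Finset.sum_le_sum fun σ _ => ?_
            rw [Finset.sum_comm]
            refine Finset.sum_le_sum fun x _ => ?_
            rw [← Finset.sum_filter, Finset.sum_const, nsmul_eq_mul]
            refine mul_le_mul_of_nonneg_right ?_ (hQ σ x)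
            exact Nat.cast_le.mpr (Finset.le_sup
              (f := fun y => (Finset.univ.filter fun i : Fin k => y ∈ 𝓑 i).card) x.2)
        _ = (χn : ℝ) * dirichlet β Λ τ f := by
            rw [← hD, Finset.mul_sum]
            exact Finset.sum_congr rfl fun σ _ => (Finset.mul_sum _ _ _).symm
    exact le_trans hstep1 hstep2
  -- conclude via the definition of the spectral gap
  rw [ge_iff_le]
  have hne : ∃ f : (Λ → Bool) → ℝ, ∃ σ σ', f σ ≠ f σ' := by
    refine ⟨fun σ => if σ ⟨x₀, hx₀⟩ then 1 else 0, fun _ => true, fun _ => false, by norm_num⟩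
  obtain ⟨f₀, hf₀⟩ := hne
  refine le_csInf ⟨dirichlet β Λ τ f₀ / isingVar β Λ τ f₀, f₀, hf₀, rfl⟩ ?_
  rintro g ⟨f, hf, rfl⟩
  have hV : 0 < isingVar β Λ τ f := isingVar_pos hf
  rw [le_div_iff₀ hV]
  have h1 : γ * (blockGap β Λ τ 𝓑 * isingVar β Λ τ f) ≤ (χn : ℝ) * dirichlet β Λ τ f :=
    le_trans (mul_le_mul_of_nonneg_left (blockGap_mul_var_le β Λ τ 𝓑 hsub f) hγ0) (hkey f)
  have h2 : (χn : ℝ)⁻¹ * blockGap β Λ τ 𝓑 * γ * isingVar β Λ τ f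
      = (χn : ℝ)⁻¹ * (γ * (blockGap β Λ τ 𝓑 * isingVar β Λ τ f)) := by ring
  rw [h2]
  calc (χn : ℝ)⁻¹ * (γ * (blockGap β Λ τ 𝓑 * isingVar β Λ τ f))
      ≤ (χn : ℝ)⁻¹ * ((χn : ℝ) * dirichlet β Λ τ f) :=
        mul_le_mul_of_nonneg_left h1 (inv_nonneg.mpr (le_of_lt hχpos))
    _ = dirichlet β Λ τ f := by
        rw [← mul_assoc, inv_mul_cancel₀ (ne_of_gt hχpos), one_mul]
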